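/- Let H_S and H_I be complex Hilbert spaces, (ξ_n) an orthonormal family in H_I, r_n ∈ ℂ, and θ ↦ φ_n(θ) ∈ H_S differentiable families such that Σ_n r_n φ_n(θ) ⊗ ξ_n is norm-convergent and differentiable with derivative Σ_n r_n (∂_θφ_n)(θ) ⊗ ξ_n. Let v be a fixed unit vector orthogonal to H_S ⊗ H_I (work in ℂ ⊕ (H_S ⊗ H_I) with v = (1,0)). Set M(θ) := 1 + Σ_n |r_n|²‖φ_n(θ)‖² and ψ(θ) := M(θ)^{−1/2} (v + Σ_n r_n φ_n(θ) ⊗ ξ_n). Then ψ(θ) is a unit vector and Q(θ; ψ) = (4/M(θ)) Σ_n |r_n|² ‖∂_θφ_n(θ)‖² − (4/M(θ)²) |Σ_n |r_n|² ⟨φ_n(θ), ∂_θφ_n(θ)⟩|². -/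

import Mathlib

open ComplexConjugate

lemma pdc_conj_mul (z : ℂ) : (starRingEnd ℂ) z * z = ((‖z‖ ^ 2 : ℝ) : ℂ) := by
  rw [mul_comm, Complex.mul_conj, Complex.normSq_eq_norm_sq]

lemma pdc_key {H_S H_I E : Type*}
    [NormedAddCommGroup H_S] [InnerProductSpace ℂ H_S]
    [NormedAddCommGroup H_I] [InnerProductSpace ℂ H_I]
    [NormedAddCommGroup E] [InnerProductSpace ℂ E]
    (tens : H_S →ₗ[ℂ] H_I →ₗ[ℂ] E)
    (htens : ∀ (a : H_S) (b : H_I) (c : H_S) (d : H_I),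
      (inner ℂ (tens a b) (tens c d) : ℂ) = (inner ℂ a c : ℂ) * (inner ℂ b d : ℂ))
    (ξ : ℕ → H_I) (hξ : Orthonormal ℂ ξ)
    (r : ℕ → ℂ) (χ χ' : ℕ → H_S) (T T' : E)
    (h : HasSum (fun n => r n • tens (χ n) (ξ n)) T)
    (h' : HasSum (fun n => r n • tens (χ' n) (ξ n)) T') :
    HasSum (fun n => ((‖r n‖ ^ 2 : ℝ) : ℂ) * (inner ℂ (χ n) (χ' n) : ℂ)) (inner ℂ T T' : ℂ) := by
  classical
  have hxi := orthonormal_iff_ite.mp hξ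
  have hterm : ∀ n m, (inner ℂ (r n • tens (χ n) (ξ n)) (r m • tens (χ' m) (ξ m)) : ℂ)
      = if m = n then ((‖r n‖ ^ 2 : ℝ) : ℂ) * (inner ℂ (χ n) (χ' n) : ℂ) else 0 := by
    intro n m
    rw [inner_smul_left, inner_smul_right, htens, hxi]
    by_cases hnm : n = m
    · subst hnm
      rw [if_pos rfl, if_pos rfl, ← pdc_conj_mul]
      ring
    · rw [if_neg hnm, if_neg (Ne.symm hnm)]
      ring
  have h1 : ∀ n, (inner ℂ (r n • tens (χ n) (ξ n)) T' : ℂ)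
      = ((‖r n‖ ^ 2 : ℝ) : ℂ) * (inner ℂ (χ n) (χ' n) : ℂ) := by
    intro n
    have h2 := (innerSL ℂ (r n • tens (χ n) (ξ n))).hasSum h'
    simp only [innerSL_apply_apply, hterm n] at h2
    exact h2.unique (hasSum_ite_eq n _)
  have h2 := (innerSL ℂ T').hasSum h
  have h3 := h2.star
  have h4 : (fun n => star ((innerSL ℂ T') (r n • tens (χ n) (ξ n))))
      = fun n => ((‖r n‖ ^ 2 : ℝ) : ℂ) * (inner ℂ (χ n) (χ' n) : ℂ) := by
    funext n
    rw [innerSL_apply_apply, RCLike.star_def, inner_conj_symm, h1 n]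
  rw [h4] at h3
  have h5 : star ((innerSL ℂ T') T) = (inner ℂ T T' : ℂ) := by
    rw [innerSL_apply_apply, RCLike.star_def, inner_conj_symm]
  rwa [h5] at h3

lemma pdc_inner_self {E : Type*} [NormedAddCommGroup E] [InnerProductSpace ℂ E] (x : E) :
    (inner ℂ x x : ℂ) = ((‖x‖ ^ 2 : ℝ) : ℂ) := by
  rw [inner_self_eq_norm_sq_to_K]
  norm_num

/-- (QFI of the outgoing weakly-pumped PDC state, Eq. (58).) For
`ψ(θ) = M(θ)^{-1/2} (v + Σₙ rₙ φₙ(θ) ⊗ ξₙ)`, with `v` a unit vector orthogonal to all simple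
tensors, `(ξₙ)` orthonormal, and `M(θ) = 1 + Σₙ |rₙ|²‖φₙ(θ)‖²`, the state `ψ(θ)` is
normalised and its pure-state QFI equals
`(4/M) Σₙ |rₙ|²‖∂φₙ‖² - (4/M²)|Σₙ |rₙ|²⟨φₙ, ∂φₙ⟩|²`. -/
theorem pdc_outgoing_QFI
    {H_S H_I E : Type*}
    [NormedAddCommGroup H_S] [InnerProductSpace ℂ H_S]
    [NormedAddCommGroup H_I] [InnerProductSpace ℂ H_I]
    [NormedAddCommGroup E] [InnerProductSpace ℂ E]
    (tens : H_S →ₗ[ℂ] H_I →ₗ[ℂ] E)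
    (htens : ∀ (a : H_S) (b : H_I) (c : H_S) (d : H_I),
      (inner ℂ (tens a b) (tens c d) : ℂ) = (inner ℂ a c : ℂ) * (inner ℂ b d : ℂ))
    (ξ : ℕ → H_I) (hξ : Orthonormal ℂ ξ)
    (r : ℕ → ℂ) (φ φd : ℕ → ℝ → H_S)
    (hφ : ∀ n t, HasDerivAt (φ n) (φd n t) t)
    (v : E) (hv : ‖v‖ = 1)
    (hvorth : ∀ (a : H_S) (b : H_I), (inner ℂ v (tens a b) : ℂ) = 0)
    (hsum : ∀ t, Summable fun n => ‖r n‖ ^ 2 * ‖φ n t‖ ^ 2)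
    (M : ℝ → ℝ) (hM : ∀ t, M t = 1 + ∑' n, ‖r n‖ ^ 2 * ‖φ n t‖ ^ 2)
    (S D : ℝ → E)
    (hS : ∀ t, HasSum (fun n => r n • tens (φ n t) (ξ n)) (S t))
    (hD : ∀ t, HasSum (fun n => r n • tens (φd n t) (ξ n)) (D t))
    (hSD : ∀ t, HasDerivAt S (D t) t)
    (ψ : ℝ → E) (hψ : ∀ t, ψ t = ((Real.sqrt (M t) : ℝ) : ℂ)⁻¹ • (v + S t))
    (θ : ℝ) :
    ‖ψ θ‖ = 1 ∧
      ∃ ψd : E, HasDerivAt ψ ψd θ ∧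
        4 * (‖ψd‖ ^ 2 - ‖(inner ℂ (ψ θ) ψd : ℂ)‖ ^ 2) =
          4 / M θ * ∑' n, ‖r n‖ ^ 2 * ‖φd n θ‖ ^ 2
            - 4 / (M θ) ^ 2 *
              ‖(∑' n, ((‖r n‖ ^ 2 : ℝ) : ℂ) * (inner ℂ (φ n θ) (φd n θ) : ℂ))‖ ^ 2 := by
  classical
  -- ⟪S t, S t⟫ and the norm formula for M
  have hSSr : ∀ t, (inner ℂ (S t) (S t) : ℂ) = (((M t - 1 : ℝ)) : ℂ) := by
    intro t
    have h1 := pdc_key tens htens ξ hξ r (fun n => φ n t) (fun n => φ n t) _ _ (hS t) (hS t)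
    have h1' : HasSum (fun n => ((‖r n‖ ^ 2 * ‖φ n t‖ ^ 2 : ℝ) : ℂ)) (inner ℂ (S t) (S t) : ℂ) := by
      refine h1.congr_fun fun n => ?_
      rw [pdc_inner_self]
      push_cast
      ring
    have h2 : HasSum (fun n => ((‖r n‖ ^ 2 * ‖φ n t‖ ^ 2 : ℝ) : ℂ))
        (((∑' n, ‖r n‖ ^ 2 * ‖φ n t‖ ^ 2 : ℝ)) : ℂ) :=
      Complex.ofRealCLM.hasSum (hsum t).hasSum
    rw [h1'.unique h2, hM t]
    norm_num
  have hnormS : ∀ t, ‖S t‖ ^ 2 = M t - 1 := by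
    intro t
    have h0 := hSSr t
    rw [pdc_inner_self] at h0
    exact_mod_cast h0
  have hMpos : ∀ t, 0 < M t := by
    intro t
    have := hnormS t
    nlinarith [sq_nonneg ‖S t‖]
  -- abbreviations at θ
  set m : ℝ := M θ with hm
  set s : ℝ := Real.sqrt m with hsdef
  set c : ℂ := (inner ℂ (S θ) (D θ) : ℂ) with hc
  have hs2 : s ^ 2 = m := Real.sq_sqrt (hMpos θ).le
  have hspos : 0 < s := Real.sqrt_pos.mpr (hMpos θ)
  have hsne : s ≠ 0 := ne_of_gt hspos
  have hmne : m ≠ 0 := ne_of_gt (hMpos θ)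
  -- orthogonality of v to S and D
  have hvsum : ∀ (χ : ℕ → H_S) (T : E), HasSum (fun n => r n • tens (χ n) (ξ n)) T →
      (inner ℂ v T : ℂ) = 0 := by
    intro χ T h
    have h2 := (innerSL ℂ v).hasSum h
    simp only [innerSL_apply_apply, inner_smul_right, hvorth, mul_zero] at h2
    exact h2.unique hasSum_zero
  have hvS : (inner ℂ v (S θ) : ℂ) = 0 := hvsum _ _ (hS θ)
  have hvD : (inner ℂ v (D θ) : ℂ) = 0 := hvsum _ _ (hD θ)
  have hSv : (inner ℂ (S θ) v : ℂ) = 0 := by rw [← inner_conj_symm, hvS, map_zero]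
  have hDv : (inner ℂ (D θ) v : ℂ) = 0 := by rw [← inner_conj_symm, hvD, map_zero]
  have hvv : (inner ℂ v v : ℂ) = 1 := by
    rw [pdc_inner_self, hv]
    norm_num
  -- inner products of g := v + S θ and D θ
  have hgg : (inner ℂ (v + S θ) (v + S θ) : ℂ) = (m : ℂ) := by
    rw [inner_add_left, inner_add_right, inner_add_right, hvv, hvS, hSv, hSSr θ]
    push_cast
    ring
  have hgD : (inner ℂ (v + S θ) (D θ) : ℂ) = c := by
    rw [inner_add_left, hvD, hc, zero_add]
  have hDg : (inner ℂ (D θ) (v + S θ) : ℂ) = (starRingEnd ℂ) c := by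
    rw [inner_add_right, hDv, zero_add, ← inner_conj_symm, hc]
  have hDD : (inner ℂ (D θ) (D θ) : ℂ) = ((‖D θ‖ ^ 2 : ℝ) : ℂ) := pdc_inner_self _
  have hDS : (inner ℂ (D θ) (S θ) : ℂ) = (starRingEnd ℂ) c := by
    rw [← inner_conj_symm, hc]
  -- norm of g
  have hgnorm2 : ‖v + S θ‖ ^ 2 = m := by
    have h0 := hgg
    rw [pdc_inner_self] at h0
    exact_mod_cast h0
  have hgnorm : ‖v + S θ‖ = s := by
    have h1 : (0:ℝ) ≤ ‖v + S θ‖ := norm_nonneg _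
    nlinarith [hs2, hgnorm2, hspos.le]
  -- normalisation
  have hψnorm : ‖ψ θ‖ = 1 := by
    rw [hψ θ, norm_smul, hgnorm, ← hm, ← hsdef, norm_inv, Complex.norm_real,
      Real.norm_eq_abs, abs_of_pos hspos, inv_mul_cancel₀ hsne]
  refine ⟨hψnorm, ?_⟩
  -- derivative of M
  have hM'' : HasDerivAt M (2 * c.re) θ := by
    have hinner : HasDerivAt (fun t => (inner ℂ (S t) (S t) : ℂ))
        ((inner ℂ (S θ) (D θ) : ℂ) + (inner ℂ (D θ) (S θ) : ℂ)) θ :=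
      (hSD θ).inner (𝕜 := ℂ) (hSD θ)
    have hre := Complex.reCLM.hasFDerivAt.comp_hasDerivAt θ hinner
    have hfun : M = fun t => 1 + (Complex.reCLM ∘ fun t => (inner ℂ (S t) (S t) : ℂ)) t := by
      funext t
      have h2 := hSSr t
      simp only [Function.comp, Complex.reCLM_apply, h2, Complex.ofReal_re]
      ring
    rw [hfun]
    have hfin : HasDerivAt (fun t => 1 + (Complex.reCLM ∘ fun t => (inner ℂ (S t) (S t) : ℂ)) t)
        (0 + Complex.reCLM (inner ℂ (S θ) (D θ) + inner ℂ (D θ) (S θ))) θ :=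
      (hasDerivAt_const θ (1:ℝ)).add hre
    convert hfin using 1
    have hconj : (inner ℂ (D θ) (S θ) : ℂ) = (starRingEnd ℂ) c := by
      rw [← inner_conj_symm, hc]
    simp only [Complex.reCLM_apply, Complex.add_re, hconj, Complex.conj_re, ← hc]
    ring
  -- derivative of the normalisation factor
  have hf : HasDerivAt (fun t => (Real.sqrt (M t))⁻¹) (-(c.re / (s * m))) θ := by
    have step1 : HasDerivAt (fun t => Real.sqrt (M t)) ((2 * c.re) / (2 * Real.sqrt m)) θ :=
      hM''.sqrt hmne
    have step2 : HasDerivAt (fun t => (Real.sqrt (M t))⁻¹)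
        (-((2 * c.re) / (2 * Real.sqrt m)) / (Real.sqrt (M θ)) ^ 2) θ := step1.inv (x := θ) (by rw [← hsdef]; exact hsne)
    convert step2 using 1
    rw [← hm, ← hsdef, ← hs2]
    field_simp
  have hfc : HasDerivAt (fun t => ((Real.sqrt (M t) : ℝ) : ℂ)⁻¹)
      (((-(c.re / (s * m)) : ℝ)) : ℂ) θ := by
    have h1 := Complex.ofRealCLM.hasFDerivAt.comp_hasDerivAt θ hf
    have h2 : (Complex.ofRealCLM ∘ fun t => (Real.sqrt (M t))⁻¹)
        = fun t => ((Real.sqrt (M t) : ℝ) : ℂ)⁻¹ := by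
      funext t
      simp [Function.comp, Complex.ofReal_inv]
    rw [h2] at h1
    exact_mod_cast h1
  have hg : HasDerivAt (fun t => v + S t) (D θ) θ := (hSD θ).const_add v
  -- the derivative of ψ
  set α : ℝ := -(c.re / (s * m)) with hα
  set ψd : E := ((α : ℝ) : ℂ) • (v + S θ) + (((s⁻¹ : ℝ)) : ℂ) • D θ with hψd
  have hψ' : HasDerivAt ψ ψd θ := by
    have h1 : HasDerivAt (fun t => ((Real.sqrt (M t) : ℝ) : ℂ)⁻¹ • (v + S t)) _ θ := hfc.smul hg
    have h2 : ψ = fun t => ((Real.sqrt (M t) : ℝ) : ℂ)⁻¹ • (v + S t) := funext hψ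
    rw [← h2] at h1
    convert h1 using 1
    rw [hψd, ← hm, ← hsdef]
    rw [add_comm]
    congr 1
    rw [← Complex.ofReal_inv]
  refine ⟨ψd, hψ', ?_⟩
  -- tsum identities
  have hDDsum : HasSum (fun n => ‖r n‖ ^ 2 * ‖φd n θ‖ ^ 2) (‖D θ‖ ^ 2) := by
    have h1 := pdc_key tens htens ξ hξ r (fun n => φd n θ) (fun n => φd n θ) _ _ (hD θ) (hD θ)
    have h2 := Complex.reCLM.hasSum h1
    have h3 : (fun n => Complex.reCLM (((‖r n‖ ^ 2 : ℝ) : ℂ) * (inner ℂ (φd n θ) (φd n θ) : ℂ)))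
        = fun n => ‖r n‖ ^ 2 * ‖φd n θ‖ ^ 2 := by
      funext n
      rw [pdc_inner_self, Complex.reCLM_apply, ← Complex.ofReal_mul, Complex.ofReal_re]
    rw [h3] at h2
    have h4 : Complex.reCLM (inner ℂ (D θ) (D θ) : ℂ) = ‖D θ‖ ^ 2 := by
      rw [hDD, Complex.reCLM_apply, Complex.ofReal_re]
    rwa [h4] at h2
  have htsum1 : (∑' n, ‖r n‖ ^ 2 * ‖φd n θ‖ ^ 2) = ‖D θ‖ ^ 2 := hDDsum.tsum_eq
  have hSDsum : HasSum (fun n => ((‖r n‖ ^ 2 : ℝ) : ℂ) * (inner ℂ (φ n θ) (φd n θ) : ℂ)) c :=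
    pdc_key tens htens ξ hξ r (fun n => φ n θ) (fun n => φd n θ) _ _ (hS θ) (hD θ)
  have htsum2 : (∑' n, ((‖r n‖ ^ 2 : ℝ) : ℂ) * (inner ℂ (φ n θ) (φd n θ) : ℂ)) = c :=
    hSDsum.tsum_eq
  rw [htsum1, htsum2]
  -- compute ‖ψd‖²
  have hψdinner : (inner ℂ ψd ψd : ℂ)
      = ((α ^ 2 * m : ℝ) : ℂ) + ((α * s⁻¹ : ℝ) : ℂ) * (c + (starRingEnd ℂ) c)
        + (((s⁻¹)^2 * ‖D θ‖ ^ 2 : ℝ) : ℂ) := by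
    rw [hψd]
    simp only [inner_add_left, inner_add_right, inner_smul_left, inner_smul_right,
      hvv, hvS, hSv, hvD, hDv, hDS, ← hc, hSSr θ, hDD, Complex.conj_ofReal]
    push_cast
    ring
  have hψdnorm : ‖ψd‖ ^ 2 = α ^ 2 * m + 2 * (α * s⁻¹) * c.re + (s⁻¹)^2 * ‖D θ‖ ^ 2 := by
    have h1 : ‖ψd‖ ^ 2 = (inner ℂ ψd ψd : ℂ).re := (inner_self_eq_norm_sq (𝕜 := ℂ) ψd).symm
    rw [h1, hψdinner]
    simp only [Complex.add_re, Complex.ofReal_re, Complex.mul_re, Complex.ofReal_im,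
      Complex.add_im, Complex.conj_re, Complex.conj_im]
    ring
  -- compute ⟪ψ θ, ψd⟫
  have hψinner : (inner ℂ (ψ θ) ψd : ℂ)
      = ((s⁻¹ * α * m : ℝ) : ℂ) + ((s⁻¹ * s⁻¹ : ℝ) : ℂ) * c := by
    rw [hψ θ, ← hm, ← hsdef, hψd, ← Complex.ofReal_inv]
    simp only [inner_smul_left, inner_add_left, inner_add_right, inner_smul_right,
      hvv, hvS, hSv, hvD, hDv, hDS, ← hc, hSSr θ, hDD, Complex.conj_ofReal]
    push_cast
    ring
  have habsψ : ‖(inner ℂ (ψ θ) ψd : ℂ)‖ ^ 2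
      = (s⁻¹ * α * m + s⁻¹ * s⁻¹ * c.re) ^ 2 + (s⁻¹ * s⁻¹ * c.im) ^ 2 := by
    rw [hψinner, Complex.sq_norm, Complex.normSq_apply]
    simp only [Complex.add_re, Complex.add_im, Complex.mul_re, Complex.mul_im,
      Complex.ofReal_re, Complex.ofReal_im]
    ring
  have habsc : ‖c‖ ^ 2 = c.re ^ 2 + c.im ^ 2 := by
    rw [Complex.sq_norm, Complex.normSq_apply]
    ring
  rw [hψdnorm, habsψ, habsc, hα, ← hs2]
  field_simp
  ring
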